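/- Let n ≥ 1 and let T, T' ⊆ ℝⁿ_{≥0} be cocompact regions with T ⊆ T' (complements in ℝⁿ_{≥0} compact). Define for each nonempty coordinate subspace E ⊆ ℝⁿ the relative Newton number ν(T∩E, T'∩E) via the Kouchnirenko alternating sum applied within E to the difference of complements. Then Σ_E ν(T∩E, T'∩E), summed over all coordinate subspaces E of positive dimension, equals the normalized volume V_N((ℝⁿ_{≥0}∖T) ∖ (ℝⁿ_{≥0}∖T')) = V_N(T' ∖ T) computed with multiplicity n! in dimension n — i.e., the inclusion–exclusion identity Σ_{E} ν_E = V_N(T'∖T) holds. -/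

import Mathlib

open MeasureTheory

/-- The `|J|`-dimensional volume of the slice of `C ⊆ ℝⁿ` by the coordinate
subspace with coordinates in `J` (other coordinates set to `0`). -/
noncomputable def volJ (n : ℕ) (J : Finset (Fin n)) (C : Set (Fin n → ℝ)) : ℝ :=
  (volume {y : J → ℝ |
      (fun i => if h : i ∈ J then y ⟨i, h⟩ else 0) ∈ C}).toReal

/-- The relative Newton number `ν(T ∩ E_J, T' ∩ E_J)` computed within the
coordinate subspace `E_J` by the Kouchnirenko alternating sum, applied to the
complements `C = ℝⁿ_{≥0}∖T` and `C' = ℝⁿ_{≥0}∖T'`. -/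
noncomputable def nuRel (n : ℕ) (J : Finset (Fin n)) (C C' : Set (Fin n → ℝ)) : ℝ :=
  ∑ J' ∈ J.powerset, (-1 : ℝ) ^ (J.card - J'.card) * (J'.card.factorial : ℝ) *
    (volJ n J' C - volJ n J' C')

/-- `volJ` at the full coordinate set is the full-dimensional volume. -/
lemma volJ_univ (n : ℕ) (C : Set (Fin n → ℝ)) : volJ n Finset.univ C = (volume C).toReal := by
  unfold volJ
  set f : {i : Fin n // i ∈ (Finset.univ : Finset (Fin n))} ≃ Fin n :=
    Equiv.subtypeUnivEquiv (fun i => Finset.mem_univ i) with hf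
  set φ := MeasurableEquiv.piCongrLeft (fun _ : Fin n => ℝ) f with hφ
  have hfun : ∀ y : {i : Fin n // i ∈ (Finset.univ : Finset (Fin n))} → ℝ,
      (fun i => if h : i ∈ (Finset.univ : Finset (Fin n)) then y ⟨i, h⟩ else 0) = φ y := by
    intro y
    funext i
    have h2 : φ y (f (f.symm i)) = y (f.symm i) := by
      rw [hφ, MeasurableEquiv.coe_piCongrLeft]
      exact Equiv.piCongrLeft_apply_apply (fun _ : Fin n => ℝ) f y (f.symm i)
    simp only [Equiv.apply_symm_apply] at h2
    rw [h2]
    simp [hf]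
  have hset : {y : {i : Fin n // i ∈ (Finset.univ : Finset (Fin n))} → ℝ |
      (fun i => if h : i ∈ (Finset.univ : Finset (Fin n)) then y ⟨i, h⟩ else 0) ∈ C}
      = φ ⁻¹' C := by
    ext y
    rw [Set.mem_setOf_eq, Set.mem_preimage, hfun y]
  rw [hset, ← MeasurableEquiv.map_apply,
    (volume_measurePreserving_piCongrLeft (fun _ : Fin n => ℝ) f).map_eq]

/-- `volJ` at the empty coordinate set is `1` when the origin lies in `C`. -/
lemma volJ_empty (n : ℕ) (C : Set (Fin n → ℝ)) (h : (fun _ => (0:ℝ)) ∈ C) :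
    volJ n ∅ C = 1 := by
  unfold volJ
  have hs : {y : ((∅ : Finset (Fin n)) : Finset (Fin n)) → ℝ |
      (fun i => if h : i ∈ (∅ : Finset (Fin n)) then y ⟨i, h⟩ else 0) ∈ C} = Set.univ := by
    ext y
    simp only [Set.mem_setOf_eq, Set.mem_univ, iff_true]
    convert h using 2
    simp
  rw [hs, Measure.volume_pi_eq_dirac isEmptyElim]
  simp

/-- The inclusion–exclusion collapse: summing the Möbius-type alternating sums
over all coordinate sets leaves only the full set. -/
lemma comb (n : ℕ) (g : Finset (Fin n) → ℝ) :
    ∑ J : Finset (Fin n), ∑ J' ∈ J.powerset, (-1:ℝ)^(J.card - J'.card) * g J'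
    = g Finset.univ := by
  classical
  rw [Finset.sum_comm' (s' := fun J' => Finset.univ.filter (fun J => J' ⊆ J))
    (t' := Finset.univ) (by intro J J'; simp [Finset.mem_powerset, and_comm])]
  have hinner : ∀ J' : Finset (Fin n),
      ∑ J ∈ Finset.univ.filter (fun J => J' ⊆ J), (-1:ℝ)^(J.card - J'.card)
      = if J' = Finset.univ then 1 else 0 := by
    intro J'
    have h1 : ∑ J ∈ Finset.univ.filter (fun J => J' ⊆ J), (-1:ℝ)^(J.card - J'.card)
        = ∑ K ∈ J'ᶜ.powerset, (-1:ℝ)^K.card := by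
      refine Finset.sum_nbij' (fun J => J \ J') (fun K => J' ∪ K) ?_ ?_ ?_ ?_ ?_
      · intro J hJ
        simp only [Finset.mem_filter, Finset.mem_univ, true_and] at hJ
        simp only [Finset.mem_powerset]
        intro x hx
        simp only [Finset.mem_sdiff] at hx
        simp [Finset.mem_compl, hx.2]
      · intro K hK
        simp
      · intro J hJ
        simp only [Finset.mem_filter, Finset.mem_univ, true_and] at hJ
        exact Finset.union_sdiff_of_subset hJ
      · intro K hK
        simp only [Finset.mem_powerset] at hK
        refine Finset.union_sdiff_cancel_left ?_
        rw [Finset.disjoint_left]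
        intro a ha haK
        exact (Finset.mem_compl.1 (hK haK)) ha
      · intro J hJ
        simp only [Finset.mem_filter, Finset.mem_univ, true_and] at hJ
        rw [Finset.card_sdiff_of_subset hJ]
    rw [h1]
    have h2 : ∑ K ∈ J'ᶜ.powerset, (-1:ℝ)^K.card = if J'ᶜ = ∅ then 1 else 0 := by
      exact_mod_cast Finset.sum_powerset_neg_one_pow_card (x := J'ᶜ)
    rw [h2]; simp only [Finset.compl_eq_empty_iff]
  calc ∑ J' : Finset (Fin n), ∑ J ∈ Finset.univ.filter (fun J => J' ⊆ J),
        (-1:ℝ)^(J.card - J'.card) * g J'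
      = ∑ J' : Finset (Fin n), (if J' = Finset.univ then 1 else 0) * g J' := by
        refine Finset.sum_congr rfl fun J' _ => ?_
        rw [← Finset.sum_mul, hinner]
    _ = g Finset.univ := by simp

/-- the inclusion–exclusion identity
`Σ_{E, dim E ≥ 1} ν(T∩E, T'∩E) = V_N(T'∖T)` for cocompact regions
`T ⊆ T' ⊆ ℝⁿ_{≥0}`. -/
theorem stmt19 (n : ℕ) (hn : 1 ≤ n) (T T' : Set (Fin n → ℝ)) (hTT' : T ⊆ T')
    (hT : T ⊆ {x | ∀ i, 0 ≤ x i}) (hT' : T' ⊆ {x | ∀ i, 0 ≤ x i})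
    (hcT : IsCompact ({x : Fin n → ℝ | ∀ i, 0 ≤ x i} \ T))
    (hcT' : IsCompact ({x : Fin n → ℝ | ∀ i, 0 ≤ x i} \ T'))
    (h0 : (fun _ => (0 : ℝ)) ∉ T') :
    ∑ J : Finset (Fin n),
      (if J = ∅ then 0 else
        nuRel n J ({x | ∀ i, 0 ≤ x i} \ T) ({x | ∀ i, 0 ≤ x i} \ T')) =
    (n.factorial : ℝ) *
      (volume (({x : Fin n → ℝ | ∀ i, 0 ≤ x i} \ T) \
        ({x : Fin n → ℝ | ∀ i, 0 ≤ x i} \ T'))).toReal := by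
  classical
  set C : Set (Fin n → ℝ) := {x | ∀ i, 0 ≤ x i} \ T with hC
  set C' : Set (Fin n → ℝ) := {x | ∀ i, 0 ≤ x i} \ T' with hC'
  have h0C' : (fun _ => (0:ℝ)) ∈ C' := ⟨fun i => le_refl 0, h0⟩
  have h0C : (fun _ => (0:ℝ)) ∈ C := ⟨fun i => le_refl 0, fun h => h0 (hTT' h)⟩
  -- the empty-set Newton number vanishes
  have hempty : nuRel n ∅ C C' = 0 := by
    unfold nuRel
    rw [Finset.powerset_empty, Finset.sum_singleton]
    simp [volJ_empty n C h0C, volJ_empty n C' h0C']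
  -- drop the `if`
  have hif : ∀ J : Finset (Fin n),
      (if J = ∅ then (0:ℝ) else nuRel n J C C') = nuRel n J C C' := by
    intro J
    by_cases h : J = ∅
    · simp [h, hempty]
    · simp [h]
  -- collapse the double sum
  have hsum : ∑ J : Finset (Fin n), nuRel n J C C'
      = (n.factorial : ℝ) * (volJ n Finset.univ C - volJ n Finset.univ C') := by
    have := comb n (fun J' => (J'.card.factorial : ℝ) * (volJ n J' C - volJ n J' C'))
    simp only [Finset.card_univ, Fintype.card_fin] at this
    rw [← this]
    refine Finset.sum_congr rfl fun J _ => ?_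
    unfold nuRel
    refine Finset.sum_congr rfl fun J' _ => ?_
    ring
  have hCC' : C' ⊆ C := Set.diff_subset_diff_right hTT'
  have hmC' : NullMeasurableSet C' volume := hcT'.isClosed.measurableSet.nullMeasurableSet
  have hfinC : volume C ≠ ⊤ := hcT.measure_lt_top.ne
  have hfinC' : volume C' ≠ ⊤ := hcT'.measure_lt_top.ne
  have hdiff : volume (C \ C') = volume C - volume C' :=
    measure_diff hCC' hmC' hfinC'
  have hle : volume C' ≤ volume C := measure_mono hCC'
  calc ∑ J : Finset (Fin n), (if J = ∅ then (0:ℝ) else nuRel n J C C')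
      = ∑ J : Finset (Fin n), nuRel n J C C' := Finset.sum_congr rfl fun J _ => hif J
    _ = (n.factorial : ℝ) * (volJ n Finset.univ C - volJ n Finset.univ C') := hsum
    _ = (n.factorial : ℝ) * ((volume C).toReal - (volume C').toReal) := by
        rw [volJ_univ, volJ_univ]
    _ = (n.factorial : ℝ) * (volume (C \ C')).toReal := by
        rw [hdiff, ENNReal.toReal_sub_of_le hle hfinC]
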